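/- arXiv:2211.02088 — 4 statements merged into one kernel-verified Lean document; each statement's English description precedes it below -/
import Mathlib

section
/- Let R be a differential field of meromorphic functions on a domain (closed under differentiation). If g is algebraic-transcendent with respect to R (i.e., satisfies a nontrivial polynomial differential equation with coefficients in R) and f is algebraic-transcendent with respect to the differential field R⟨g⟩ generated by adjoining g and all its derivatives to R, then f is algebraic-transcendent with respect to R. -/
section Der
variable {K : Type*} [Field K] {δ : K → K}
  (hadd : ∀ x y : K, δ (x + y) = δ x + δ y)
  (hmul : ∀ x y : K, δ (x * y) = x * δ y + δ x * y)

include hadd in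
lemma der_zero : δ 0 = 0 := by
  have := hadd 0 0
  simpa using this.symm

include hmul in
lemma der_one : δ 1 = 0 := by
  have h := hmul 1 1
  simp only [mul_one, one_mul] at h
  linear_combination -h

include hadd in
lemma der_neg (x : K) : δ (-x) = -δ x := by
  have h := hadd x (-x)
  rw [add_neg_cancel, der_zero hadd] at h
  linear_combination -h

include hadd hmul in
lemma der_inv {x : K} (hx : x ≠ 0) : δ x⁻¹ = -(δ x * x⁻¹ * x⁻¹) := by
  have h := hmul x x⁻¹
  rw [mul_inv_cancel₀ hx, der_one hmul] at h
  have h2 : x * δ x⁻¹ = -(δ x * x⁻¹) := by linear_combination -h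
  calc δ x⁻¹ = x⁻¹ * (x * δ x⁻¹) := by rw [← mul_assoc, inv_mul_cancel₀ hx, one_mul]
    _ = x⁻¹ * (-(δ x * x⁻¹)) := by rw [h2]
    _ = -(δ x * x⁻¹ * x⁻¹) := by ring

include hadd in
lemma der_sum {ι : Type*} (s : Finset ι) (f : ι → K) :
    δ (∑ i ∈ s, f i) = ∑ i ∈ s, δ (f i) := by
  classical
  induction s using Finset.induction_on with
  | empty => simpa using der_zero hadd
  | insert a s h ih => rw [Finset.sum_insert h, hadd, ih, Finset.sum_insert h]

include hadd hmul in
lemma der_pow (u : K) (n : ℕ) : δ (u ^ n) = (n : K) * u ^ (n - 1) * δ u := by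
  induction n with
  | zero => simp [der_one hmul]
  | succ n ih =>
    rw [pow_succ, hmul, ih]
    cases n with
    | zero => simp
    | succ m =>
      simp only [Nat.add_sub_cancel]
      push_cast
      ring

include hadd hmul in
lemma mem_stab (E : Subfield K) (s : Set K)
    (hs : ∀ x ∈ s, x ∈ E ∧ δ x ∈ E) :
    ∀ x ∈ Subfield.closure s, x ∈ E ∧ δ x ∈ E := by
  classical
  let C : Subfield K :=
  { carrier := {x | x ∈ E ∧ δ x ∈ E}
    zero_mem' := ⟨E.zero_mem, by rw [der_zero hadd]; exact E.zero_mem⟩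
    one_mem' := ⟨E.one_mem, by rw [der_one hmul]; exact E.zero_mem⟩
    add_mem' := by
      rintro a b ⟨ha, ha'⟩ ⟨hb, hb'⟩
      exact ⟨E.add_mem ha hb, by rw [hadd]; exact E.add_mem ha' hb'⟩
    mul_mem' := by
      rintro a b ⟨ha, ha'⟩ ⟨hb, hb'⟩
      exact ⟨E.mul_mem ha hb, by rw [hmul]; exact E.add_mem (E.mul_mem ha hb') (E.mul_mem ha' hb)⟩
    neg_mem' := by
      rintro a ⟨ha, ha'⟩
      exact ⟨E.neg_mem ha, by rw [der_neg hadd]; exact E.neg_mem ha'⟩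
    inv_mem' := by
      rintro a ⟨ha, ha'⟩
      by_cases h0 : a = 0
      · subst h0; show (0:K)⁻¹ ∈ E ∧ δ (0:K)⁻¹ ∈ E; rw [inv_zero]; exact ⟨ha, ha'⟩
      · refine ⟨E.inv_mem ha, ?_⟩
        rw [der_inv hadd hmul h0]
        exact E.neg_mem (E.mul_mem (E.mul_mem ha' (E.inv_mem ha)) (E.inv_mem ha)) }
  intro x hx
  have hC : Subfield.closure s ≤ C := Subfield.closure_le.mpr hs
  exact hC hx

open Polynomial in
include hadd hmul in
lemma der_eval (P : K[X]) (u : K) :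
    δ (P.eval u) = (P.sum fun i a => δ a * u ^ i) + (derivative P).eval u * δ u := by
  induction P using Polynomial.induction_on' with
  | add p q hp hq =>
    rw [eval_add, hadd, hp, hq, derivative_add, eval_add,
      Polynomial.sum_add_index _ _ _ (fun i => by rw [der_zero hadd]; ring)
        (fun a b₁ b₂ => by rw [hadd]; ring)]
    ring
  | monomial n a =>
    rw [eval_monomial, hmul, der_pow hadd hmul, derivative_monomial, eval_monomial,
      Polynomial.sum_monomial_index _ _ (by rw [der_zero hadd]; ring)]
    ring

end Der

lemma closure_union_closure {K : Type*} [Field K] (A B : Set K) :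
    Subfield.closure (↑(Subfield.closure A) ∪ B) = Subfield.closure (A ∪ B) := by
  apply le_antisymm
  · rw [Subfield.closure_le]
    rintro x (hx | hx)
    · exact Subfield.closure_mono Set.subset_union_left hx
    · exact Subfield.subset_closure (Or.inr hx)
  · exact Subfield.closure_mono (Set.union_subset_union_left _ Subfield.subset_closure)

lemma eval_mem_subfield {K : Type*} [Field K] (E : Subfield K) (p : Polynomial K)
    (hp : ∀ i, p.coeff i ∈ E) {u : K} (hu : u ∈ E) : p.eval u ∈ E := by
  rw [Polynomial.eval_eq_sum, Polynomial.sum_def]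
  exact sum_mem fun i _ => E.mul_mem (hp i) (pow_mem hu i)

section Step
variable {K : Type*} [Field K] [CharZero K] {δ : K → K}
  (hadd : ∀ x y : K, δ (x + y) = δ x + δ y)
  (hmul : ∀ x y : K, δ (x * y) = x * δ y + δ x * y)

open Polynomial in
include hadd hmul in
lemma der_step (F E : Subfield K) (hFE : F ≤ E) (hδF : ∀ a ∈ F, δ a ∈ E)
    (u : K) (hu : u ∈ E) (halg : IsAlgebraic ↥F u) : δ u ∈ E := by
  classical
  have hint : IsIntegral ↥F u := halg.isIntegral
  set p : Polynomial ↥F := minpoly ↥F u with hp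
  have hp0 : p ≠ 0 := minpoly.ne_zero hint
  have hdeg : 0 < p.natDegree := minpoly.natDegree_pos hint
  set P : K[X] := p.map (algebraMap ↥F K) with hP
  have hPev : P.eval u = 0 := by
    rw [hP, Polynomial.eval_map, ← Polynomial.aeval_def, minpoly.aeval]
  -- derivative of minpoly doesn't vanish at u
  have hd0 : derivative p ≠ 0 := by
    intro h
    have := Polynomial.natDegree_eq_zero_of_derivative_eq_zero h
    omega
  have hB : (derivative P).eval u ≠ 0 := by
    rw [hP, Polynomial.derivative_map, Polynomial.eval_map, ← Polynomial.aeval_def]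
    intro h
    have hle := minpoly.degree_le_of_ne_zero ↥F u hd0 h
    exact absurd hle (not_le.mpr (Polynomial.degree_derivative_lt hp0))
  -- coefficients
  have hcoeff : ∀ i, P.coeff i ∈ F := by
    intro i
    rw [hP, Polynomial.coeff_map]
    exact (p.coeff i).2
  -- differentiate the relation
  have key := der_eval hadd hmul P u
  rw [hPev, der_zero hadd] at key
  have hA : (P.sum fun i a => δ a * u ^ i) ∈ E := by
    rw [Polynomial.sum_def]
    exact sum_mem fun i _ => E.mul_mem (hδF _ (hcoeff i)) (pow_mem hu i)
  have hBmem : (derivative P).eval u ∈ E := by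
    refine eval_mem_subfield E _ (fun i => ?_) hu
    rw [hP, Polynomial.derivative_map, Polynomial.coeff_map]
    exact hFE (p.derivative.coeff i).2
  have : δ u = -(P.sum fun i a => δ a * u ^ i) * ((derivative P).eval u)⁻¹ := by
    field_simp
    linear_combination -key
  rw [this]
  exact E.mul_mem (E.neg_mem hA) (E.inv_mem hBmem)


end Step


section Count
open MvPolynomial
variable {K : Type*} [Field K]

set_option synthInstance.maxHeartbeats 800000 in
set_option maxHeartbeats 1600000 in
lemma frac_rep (R : Subfield K) {r : ℕ} (t : Fin r → K) :
    ∀ z ∈ Subfield.closure ((R : Set K) ∪ Set.range t),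
      ∃ p q : MvPolynomial (Fin r) ↥R, aeval t q ≠ 0 ∧ z * aeval t q = aeval t p := by
  classical
  let Frac : Subfield K :=
  { carrier := {z | ∃ p q : MvPolynomial (Fin r) ↥R, aeval t q ≠ 0 ∧ z * aeval t q = aeval t p}
    zero_mem' := ⟨0, 1, by simp, by simp⟩
    one_mem' := ⟨1, 1, by simp, by simp⟩
    add_mem' := by
      rintro a b ⟨p1, q1, hq1, h1⟩ ⟨p2, q2, hq2, h2⟩
      refine ⟨p1 * q2 + p2 * q1, q1 * q2, by simpa using mul_ne_zero hq1 hq2, ?_⟩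
      simp only [map_add, map_mul]
      linear_combination aeval t q2 * h1 + aeval t q1 * h2
    mul_mem' := by
      rintro a b ⟨p1, q1, hq1, h1⟩ ⟨p2, q2, hq2, h2⟩
      refine ⟨p1 * p2, q1 * q2, by simpa using mul_ne_zero hq1 hq2, ?_⟩
      simp only [map_mul]
      linear_combination b * aeval t q2 * h1 + aeval t p1 * h2
    neg_mem' := by
      rintro a ⟨p, q, hq, h⟩
      exact ⟨-p, q, hq, by simp only [map_neg]; linear_combination -h⟩
    inv_mem' := by
      rintro a ⟨p, q, hq, h⟩
      by_cases ha : a = 0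
      · exact ⟨0, 1, by simp, by simp [ha]⟩
      · have hp : aeval t p ≠ 0 := by rw [← h]; exact mul_ne_zero ha hq
        refine ⟨q, p, hp, ?_⟩
        rw [← h]
        field_simp }
  intro z hz
  have hle : Subfield.closure ((R : Set K) ∪ Set.range t) ≤ Frac := by
    rw [Subfield.closure_le]
    rintro y (hy | ⟨j, rfl⟩)
    · exact ⟨C ⟨y, hy⟩, 1, by simp, by rw [map_one, mul_one, aeval_C]; rfl⟩
    · exact ⟨X j, 1, by simp, by simp⟩
  exact hle hz

set_option maxHeartbeats 2000000 in
lemma not_algIndep_of_mem_closure (R : Subfield K) {r : ℕ} (t : Fin r → K)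
    (x : Fin (r+1) → K)
    (hx : ∀ i, x i ∈ Subfield.closure ((R : Set K) ∪ Set.range t)) :
    ¬ AlgebraicIndependent ↥R x := by
  classical
  intro hind
  choose p q hq hpq using fun i => frac_rep R t (x i) (hx i)
  obtain ⟨D, hD⟩ : ∃ D : ℕ, ∀ i, (p i).totalDegree ≤ D ∧ (q i).totalDegree ≤ D := by
    refine ⟨Finset.univ.sup (fun i => max (p i).totalDegree (q i).totalDegree),
      fun i => ⟨?_, ?_⟩⟩
    · exact le_trans (le_max_left _ _)
        (Finset.le_sup (f := fun i => max (p i).totalDegree (q i).totalDegree)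
          (Finset.mem_univ i))
    · exact le_trans (le_max_right _ _)
        (Finset.le_sup (f := fun i => max (p i).totalDegree (q i).totalDegree)
          (Finset.mem_univ i))
  set Cst := (r+1) * D with hCst
  set d := (Cst+1)^r + 1 with hd
  set N := Cst * d with hN
  set v : (Fin (r+1) → Fin (d+1)) → K := fun α => ∏ i, x i ^ (α i : ℕ) with hv
  -- linear independence of the monomials in the x's
  have hvind : LinearIndependent ↥R v := by
    set ι : (Fin (r+1) → Fin (d+1)) → (Fin (r+1) →₀ ℕ) :=
      fun α => Finsupp.equivFunOnFinite.symm (fun i => (α i : ℕ)) with hι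
    have hinj : Function.Injective ι := by
      intro a b hab
      have h2 := Finsupp.equivFunOnFinite.symm.injective hab
      funext i
      exact Fin.val_injective (congrFun h2 i)
    have h1 : LinearIndependent ↥R
        ((MvPolynomial.basisMonomials (Fin (r+1)) ↥R) ∘ ι) :=
      (MvPolynomial.basisMonomials (Fin (r+1)) ↥R).linearIndependent.comp ι hinj
    have h2 := h1.map' (MvPolynomial.aeval x).toLinearMap
      (LinearMap.ker_eq_bot.mpr (by exact hind))
    have hveq : v = (⇑(MvPolynomial.aeval x).toLinearMap ∘
        ((MvPolynomial.basisMonomials (Fin (r+1)) ↥R) ∘ ι)) := by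
      funext α
      simp only [hv, Function.comp_apply, MvPolynomial.coe_basisMonomials,
        AlgHom.toLinearMap_apply, MvPolynomial.aeval_monomial, map_one, one_mul,
        Finsupp.prod_pow, hι, Finsupp.coe_equivFunOnFinite_symm]
    rw [hveq]
    exact h2
  set Q : K := ∏ i, (aeval t (q i)) ^ d with hQ
  have hQ0 : Q ≠ 0 := Finset.prod_ne_zero_iff.mpr fun i _ => pow_ne_zero _ (hq i)
  set base : (Fin r → Fin (N+1)) → K := fun β => ∏ j, t j ^ (β j : ℕ) with hbase
  set w : (Fin r → Fin (N+1)) → K := fun β => base β * Q⁻¹ with hw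
  -- low-degree polynomials evaluate into the span of `base`
  have hmono : ∀ s : MvPolynomial (Fin r) ↥R, s.totalDegree ≤ N →
      aeval t s ∈ Submodule.span ↥R (Set.range base) := by
    intro s hs
    have hrepr : aeval t s = ∑ c ∈ s.support, (coeff c s) • ∏ j, t j ^ c j := by
      rw [aeval_def, eval₂_eq']
      exact Finset.sum_congr rfl fun c _ => (Algebra.smul_def _ _).symm
    rw [hrepr]
    refine Submodule.sum_mem _ fun c hc => Submodule.smul_mem _ _ (Submodule.subset_span ?_)
    have hcj : ∀ j, c j < N + 1 := by
      intro j
      have h1 : c j ≤ c.sum fun _ e => e := by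
        by_cases hj : j ∈ c.support
        · exact Finset.single_le_sum (f := fun a => c a) (fun i _ => Nat.zero_le _) hj
        · simp [Finsupp.notMem_support_iff.mp hj]
      exact Nat.lt_succ_of_le (h1.trans ((le_totalDegree hc).trans hs))
    exact ⟨fun j => ⟨c j, hcj j⟩, rfl⟩
  -- every monomial in the x's lies in the span of `w`
  have hspan : ∀ α, v α ∈ Submodule.span ↥R (Set.range w) := by
    intro α
    set num : MvPolynomial (Fin r) ↥R :=
      ∏ i, (p i) ^ (α i : ℕ) * (q i) ^ (d - (α i : ℕ)) with hnum
    have hdegnum : num.totalDegree ≤ N := by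
      calc num.totalDegree
          ≤ ∑ i, ((p i ^ (α i : ℕ)) * (q i ^ (d - (α i : ℕ)))).totalDegree :=
            totalDegree_finset_prod _ _
        _ ≤ ∑ _i : Fin (r+1), d * D := by
            refine Finset.sum_le_sum fun i _ => ?_
            have hα : (α i : ℕ) ≤ d := Nat.lt_succ_iff.mp (α i).isLt
            calc ((p i ^ (α i : ℕ)) * (q i ^ (d - (α i : ℕ)))).totalDegree
                ≤ (p i ^ (α i : ℕ)).totalDegree + (q i ^ (d - (α i : ℕ))).totalDegree :=
                  totalDegree_mul _ _
              _ ≤ (α i : ℕ) * (p i).totalDegree + (d - (α i : ℕ)) * (q i).totalDegree :=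
                  add_le_add (totalDegree_pow _ _) (totalDegree_pow _ _)
              _ ≤ (α i : ℕ) * D + (d - (α i : ℕ)) * D :=
                  add_le_add (Nat.mul_le_mul_left _ (hD i).1) (Nat.mul_le_mul_left _ (hD i).2)
              _ = d * D := by rw [← Nat.add_mul]; congr 1; omega
        _ = N := by
            rw [Finset.sum_const, Finset.card_univ, Fintype.card_fin, smul_eq_mul, hN, hCst]
            ring
    have hva : v α * Q = aeval t num := by
      rw [hv, hQ, hnum, map_prod, ← Finset.prod_mul_distrib]
      refine Finset.prod_congr rfl fun i _ => ?_
      have hα : (α i : ℕ) ≤ d := Nat.lt_succ_iff.mp (α i).isLt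
      rw [map_mul, map_pow, map_pow, ← hpq i, mul_pow, mul_assoc, ← pow_add,
        Nat.add_sub_cancel' hα]
    have h3 : aeval t num ∈ Submodule.span ↥R (Set.range base) := hmono num hdegnum
    have h4 : v α = aeval t num * Q⁻¹ := by
      rw [← hva]
      field_simp
    have himg : Submodule.span ↥R (Set.range w) =
        Submodule.map (LinearMap.mulRight ↥R Q⁻¹) (Submodule.span ↥R (Set.range base)) := by
      rw [← Submodule.span_image]
      congr 1
      rw [← Set.range_comp]
      rfl
    rw [h4, himg]
    exact Submodule.mem_map_of_mem h3
  -- cardinality contradiction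
  set W := Submodule.span ↥R (Set.range w) with hW
  haveI : FiniteDimensional ↥R ↥W := FiniteDimensional.span_of_finite _ (Set.finite_range w)
  set v' : (Fin (r+1) → Fin (d+1)) → ↥W := fun α => ⟨v α, hspan α⟩ with hv'
  have hv'ind : LinearIndependent ↥R v' := by
    apply LinearIndependent.of_comp W.subtype
    exact hvind
  have hcard := hv'ind.fintype_card_le_finrank
  have hfr : Module.finrank ↥R ↥W ≤ Fintype.card (Fin r → Fin (N+1)) := finrank_range_le_card w
  rw [Fintype.card_fun, Fintype.card_fin, Fintype.card_fin] at hcard hfr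
  have harith : (N+1)^r < (d+1)^(r+1) := by
    have h1 : N + 1 ≤ (Cst+1) * d := by
      have : 1 ≤ d := by omega
      calc N + 1 = Cst * d + 1 := by rw [hN]
        _ ≤ Cst * d + d := by omega
        _ = (Cst + 1) * d := by ring
    calc (N+1)^r ≤ ((Cst+1) * d)^r := Nat.pow_le_pow_left h1 r
      _ = (Cst+1)^r * d^r := mul_pow _ _ _
      _ < d * d^r := by
          have hdr : 0 < d ^ r := pow_pos (by omega) r
          exact (Nat.mul_lt_mul_right hdr).mpr (by omega)
      _ = d^(r+1) := by ring
      _ ≤ (d+1)^(r+1) := Nat.pow_le_pow_left (by omega) _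
  omega

end Count

/-- `h` is algebraic-transcendent with respect to the subfield `R` of the differential
field `(K, δ)`: it satisfies a nontrivial polynomial differential equation with
coefficients in `R`. -/
def AlgTransOver {K : Type*} [Field K] (δ : K → K) (R : Subfield K) (h : K) : Prop :=
  ∃ (m : ℕ) (P : MvPolynomial (Fin (m + 1)) ↥R), P ≠ 0 ∧
    MvPolynomial.aeval (fun j : Fin (m + 1) => δ^[(j : ℕ)] h) P = 0

section Core
variable {K : Type*} [Field K] [CharZero K] {δ : K → K}
  (hadd : ∀ x y : K, δ (x + y) = δ x + δ y)
  (hmul : ∀ x y : K, δ (x * y) = x * δ y + δ x * y)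


include hadd hmul in
lemma der_core (R : Subfield K) (hR : ∀ x ∈ R, δ x ∈ R) (h : K)
    (hh : AlgTransOver δ R h) :
    ∃ m : ℕ,
      (∀ y ∈ Subfield.closure ((R : Set K) ∪ Set.range fun j : Fin (m+1) => δ^[(j:ℕ)] h),
        δ y ∈ Subfield.closure ((R : Set K) ∪ Set.range fun j : Fin (m+1) => δ^[(j:ℕ)] h)) ∧
      ∀ j : ℕ, δ^[j] h ∈
        Subfield.closure ((R : Set K) ∪ Set.range fun j : Fin (m+1) => δ^[(j:ℕ)] h) := by
  classical
  have hdep : ∃ m : ℕ, ¬ AlgebraicIndependent ↥R fun j : Fin (m+1) => δ^[(j:ℕ)] h := by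
    obtain ⟨m, P, hP0, hPev⟩ := hh
    exact ⟨m, fun hind => hP0 (algebraicIndependent_iff.mp hind P hPev)⟩
  obtain ⟨m, hm, hmin⟩ : ∃ m : ℕ,
      (¬ AlgebraicIndependent ↥R fun j : Fin (m+1) => δ^[(j:ℕ)] h) ∧
      ∀ k < m, AlgebraicIndependent ↥R fun j : Fin (k+1) => δ^[(j:ℕ)] h :=
    ⟨Nat.find hdep, Nat.find_spec hdep, fun k hk => not_not.mp (Nat.find_min hdep hk)⟩
  have hindm : AlgebraicIndependent ↥R fun j : Fin m => δ^[(j:ℕ)] h := by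
    cases m with
    | zero => exact algebraicIndependent_empty_type_iff.mpr (algebraMap ↥R K).injective
    | succ k => exact hmin k (Nat.lt_succ_self k)
  set x : Fin m → K := fun j => δ^[(j:ℕ)] h with hxdef
  set u : K := δ^[m] h with hudef
  set E : Subfield K :=
    Subfield.closure ((R : Set K) ∪ Set.range fun j : Fin (m+1) => δ^[(j:ℕ)] h) with hEdef
  set F : Subfield K := Subfield.closure ((R : Set K) ∪ Set.range x) with hFdef
  have hopt : ¬ AlgebraicIndependent ↥R fun o : Option (Fin m) => o.elim u x := by
    intro hoi
    apply hm
    have hcomp : ((fun j : Fin (m+1) => δ^[(j:ℕ)] h) ∘ (finSuccEquivLast.symm :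
        Option (Fin m) → Fin (m+1))) = fun o : Option (Fin m) => o.elim u x := by
      funext o
      cases o with
      | none => simp [finSuccEquivLast]; rfl
      | some i => simp [finSuccEquivLast]; rfl
    exact (algebraicIndependent_equiv' finSuccEquivLast.symm hcomp).mp hoi
  have halg0 : IsAlgebraic ↥(Algebra.adjoin ↥R (Set.range x)) u := by
    by_contra hT
    exact hopt ((hindm.option_iff_transcendental u).mpr hT)
  have hadjF : ∀ a : K, a ∈ Algebra.adjoin ↥R (Set.range x) → a ∈ F := by
    intro a ha
    induction ha using Algebra.adjoin_induction with
    | mem y hy => exact Subfield.subset_closure (Or.inr hy)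
    | algebraMap r => exact Subfield.subset_closure (Or.inl r.2)
    | add y z _ _ hy hz => exact F.add_mem hy hz
    | mul y z _ _ hy hz => exact F.mul_mem hy hz
  let ψ : ↥(Algebra.adjoin ↥R (Set.range x)) →+* ↥F :=
    { toFun := fun a => ⟨a.1, hadjF a.1 a.2⟩
      map_one' := rfl
      map_mul' := fun _ _ => rfl
      map_zero' := rfl
      map_add' := fun _ _ => rfl }
  have hψinj : Function.Injective ψ := fun a b hab => by
    apply Subtype.ext
    have h2 := congrArg (Subtype.val : ↥F → K) hab
    exact h2
  have halgF : IsAlgebraic ↥F u := by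
    obtain ⟨p0, hp00, hp0ev⟩ := halg0
    refine ⟨p0.map ψ, ?_, ?_⟩
    · intro hzero
      exact hp00 (Polynomial.map_injective ψ hψinj (by rw [hzero, Polynomial.map_zero]))
    · rw [Polynomial.aeval_def, Polynomial.eval₂_map]
      have hcomp : (algebraMap ↥F K).comp ψ = algebraMap ↥(Algebra.adjoin ↥R (Set.range x)) K :=
        RingHom.ext fun a => rfl
      rw [hcomp, ← Polynomial.aeval_def]
      exact hp0ev
  have hFE : F ≤ E := by
    rw [hFdef, Subfield.closure_le]
    apply Set.union_subset
    · exact fun y hy => Subfield.subset_closure (Or.inl hy)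
    · rintro y ⟨j, rfl⟩
      exact Subfield.subset_closure (Or.inr ⟨j.castSucc, by simp [hxdef]⟩)
  have hgenF : ∀ y ∈ (R : Set K) ∪ Set.range x, y ∈ E ∧ δ y ∈ E := by
    rintro y (hy | ⟨j, rfl⟩)
    · exact ⟨Subfield.subset_closure (Or.inl hy), Subfield.subset_closure (Or.inl (hR y hy))⟩
    · refine ⟨Subfield.subset_closure (Or.inr ⟨j.castSucc, by simp [hxdef]⟩), ?_⟩
      show δ (δ^[(j:ℕ)] h) ∈ E
      rw [← Function.iterate_succ_apply' δ (j:ℕ) h]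
      exact Subfield.subset_closure (Or.inr ⟨⟨(j:ℕ)+1, by omega⟩, rfl⟩)
  have hδF : ∀ a ∈ F, δ a ∈ E := fun a ha => (mem_stab hadd hmul E _ hgenF a ha).2
  have hu : u ∈ E := Subfield.subset_closure (Or.inr ⟨Fin.last m, rfl⟩)
  have hδu : δ u ∈ E := der_step hadd hmul F E hFE hδF u hu halgF
  have hgenE : ∀ y ∈ (R : Set K) ∪ Set.range fun j : Fin (m+1) => δ^[(j:ℕ)] h,
      y ∈ E ∧ δ y ∈ E := by
    rintro y (hy | ⟨j, rfl⟩)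
    · exact ⟨Subfield.subset_closure (Or.inl hy), Subfield.subset_closure (Or.inl (hR y hy))⟩
    · refine ⟨Subfield.subset_closure (Or.inr ⟨j, rfl⟩), ?_⟩
      show δ (δ^[(j:ℕ)] h) ∈ E
      rw [← Function.iterate_succ_apply' δ (j:ℕ) h]
      rcases Nat.lt_succ_iff_lt_or_eq.mp j.isLt with hj | hj
      · exact Subfield.subset_closure (Or.inr ⟨⟨(j:ℕ)+1, by omega⟩, rfl⟩)
      · rw [hj, Function.iterate_succ_apply']
        exact hδu
  have hstab := mem_stab hadd hmul E _ hgenE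
  refine ⟨m, fun y hy => (hstab y hy).2, ?_⟩
  intro j
  induction j with
  | zero => exact Subfield.subset_closure (Or.inr ⟨0, rfl⟩)
  | succ n ih =>
    rw [Function.iterate_succ_apply']
    exact (hstab _ ih).2
end Core

lemma algTransOver_mono {K : Type*} [Field K] {δ : K → K} {S E : Subfield K}
    (hSE : S ≤ E) {f : K} (hf : AlgTransOver δ S f) : AlgTransOver δ E f := by
  obtain ⟨n, P, hP0, hPev⟩ := hf
  have hinj : Function.Injective (Subfield.inclusion hSE) := fun a b hab => by
    apply Subtype.ext
    exact congrArg (Subtype.val : ↥E → K) hab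
  refine ⟨n, MvPolynomial.map (Subfield.inclusion hSE) P, ?_, ?_⟩
  · intro h0
    exact hP0 (MvPolynomial.map_injective _ hinj
      (by rw [h0, (MvPolynomial.map (Subfield.inclusion hSE)).map_zero]))
  · rw [MvPolynomial.aeval_def, MvPolynomial.eval₂_map]
    have hcomp : (algebraMap ↥E K).comp (Subfield.inclusion hSE) = algebraMap ↥S K :=
      RingHom.ext fun a => rfl
    rw [hcomp, ← MvPolynomial.aeval_def]
    exact hPev

lemma range_fin_append {α : Type*} {m n : ℕ} (a : Fin m → α) (b : Fin n → α) :
    Set.range (Fin.append a b) = Set.range a ∪ Set.range b := by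
  ext y
  constructor
  · rintro ⟨i, rfl⟩
    induction i using Fin.addCases with
    | left j => rw [Fin.append_left]; exact Or.inl ⟨j, rfl⟩
    | right j => rw [Fin.append_right]; exact Or.inr ⟨j, rfl⟩
  · rintro (⟨j, rfl⟩ | ⟨j, rfl⟩)
    · exact ⟨Fin.castAdd n j, Fin.append_left a b j⟩
    · exact ⟨Fin.natAdd m j, Fin.append_right a b j⟩

/-- Tower property of algebraic-transcendence (§5): in a differential field `(K, δ)` of
characteristic zero, if `g` is algebraic-transcendent over a differentially closed
subfield `R` and `f` is algebraic-transcendent over the differential subfield `R⟨g⟩`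
generated by adjoining `g` and all its derivatives, then `f` is algebraic-transcendent
over `R`. -/
theorem stmt_13 (K : Type*) [Field K] [CharZero K] (δ : K → K)
    (hadd : ∀ x y : K, δ (x + y) = δ x + δ y)
    (hmul : ∀ x y : K, δ (x * y) = x * δ y + δ x * y)
    (R : Subfield K) (hR : ∀ x ∈ R, δ x ∈ R)
    (g f : K)
    (hg : AlgTransOver δ R g)
    (hf : AlgTransOver δ
      (Subfield.closure ((R : Set K) ∪ Set.range fun j : ℕ => δ^[j] g)) f) :
    AlgTransOver δ R f := by
  classical
  obtain ⟨mg, hEgstab, hEgmem⟩ := der_core hadd hmul R hR g hg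
  set S : Subfield K := Subfield.closure ((R : Set K) ∪ Set.range fun j : ℕ => δ^[j] g)
    with hS
  set Eg : Subfield K :=
    Subfield.closure ((R : Set K) ∪ Set.range fun j : Fin (mg+1) => δ^[(j:ℕ)] g) with hEg
  have hSEg : S ≤ Eg := by
    rw [hS, Subfield.closure_le]
    rintro y (hy | ⟨j, rfl⟩)
    · exact Subfield.subset_closure (Or.inl hy)
    · exact hEgmem j
  have hf' : AlgTransOver δ Eg f := algTransOver_mono hSEg hf
  obtain ⟨mf, _, hEfmem⟩ := der_core hadd hmul Eg hEgstab f hf'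
  set t : Fin ((mg+1) + (mf+1)) → K :=
    Fin.append (fun j : Fin (mg+1) => δ^[(j:ℕ)] g) (fun j : Fin (mf+1) => δ^[(j:ℕ)] f) with ht
  have hunion :
      Subfield.closure ((Eg : Set K) ∪ Set.range fun j : Fin (mf+1) => δ^[(j:ℕ)] f)
        = Subfield.closure ((R : Set K) ∪ Set.range t) := by
    rw [hEg, closure_union_closure, Set.union_assoc, ht, range_fin_append]
  have hxall : ∀ i : Fin ((mg+1) + (mf+1) + 1),
      δ^[(i:ℕ)] f ∈ Subfield.closure ((R : Set K) ∪ Set.range t) := by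
    intro i
    rw [← hunion]
    exact hEfmem i
  have hnind := not_algIndep_of_mem_closure R t
    (fun i : Fin ((mg+1) + (mf+1) + 1) => δ^[(i:ℕ)] f) hxall
  have hex : ¬ ∀ P : MvPolynomial (Fin ((mg+1) + (mf+1) + 1)) ↥R,
      MvPolynomial.aeval (fun i : Fin ((mg+1) + (mf+1) + 1) => δ^[(i:ℕ)] f) P = 0 → P = 0 :=
    fun hall => hnind (algebraicIndependent_iff.mpr hall)
  push_neg at hex
  obtain ⟨P, hPev, hP0⟩ := hex
  exact ⟨(mg+1) + (mf+1), P, hP0, hPev⟩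
end

section
/- Let τ₀, ..., τ_k be distinct real numbers and a₀, ..., a_k complex numbers not all zero. Then the function f(s) = a₀ e^{i τ₀ s} + ... + a_k e^{i τ_k s} does not tend to 0 as s → +∞ along the reals; in fact, for any real s₀ with f(s₀) ≠ 0 there is a sequence s_m → +∞ of reals with f(s_m) → f(s₀). -/
open Filter

noncomputable def chr (t : ℝ) : Multiplicative ℝ →* ℂ where
  toFun s := Complex.exp (Complex.I * (t : ℂ) * ((Multiplicative.toAdd s : ℝ) : ℂ))
  map_one' := by simp
  map_mul' x y := by
    simp only [toAdd_mul]
    rw [← Complex.exp_add]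
    push_cast
    ring_nf

lemma chr_inj : Function.Injective chr := by
  intro t t' h
  by_contra hne
  have hs : chr t (Multiplicative.ofAdd (Real.pi / (t - t'))) =
      chr t' (Multiplicative.ofAdd (Real.pi / (t - t'))) := by rw [h]
  simp only [chr, MonoidHom.coe_mk, OneHom.coe_mk, toAdd_ofAdd] at hs
  have hd : (t : ℂ) - t' ≠ 0 := by
    simpa [sub_eq_zero] using fun hh => hne (by exact_mod_cast hh)
  set c : ℂ := ((Real.pi / (t - t') : ℝ) : ℂ) with hc
  have h1 : Complex.exp (Complex.I * ((t : ℂ) - t') * c) = 1 := by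
    rw [show Complex.I * ((t : ℂ) - t') * c
        = Complex.I * t * c - Complex.I * t' * c by ring, Complex.exp_sub, hs, div_self]
    exact Complex.exp_ne_zero _
  have h2 : Complex.I * ((t : ℂ) - t') * c = Real.pi * Complex.I := by
    rw [hc]
    have hd' : (t : ℂ) - t' ≠ 0 := hd
    push_cast
    field_simp
  rw [h2, Complex.exp_pi_mul_I] at h1
  norm_num at h1

lemma exists_nonzero (k : ℕ) (τ : Fin (k + 1) → ℝ) (hτ : Function.Injective τ)
    (a : Fin (k + 1) → ℂ) (ha : ∃ j, a j ≠ 0) :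
    ∃ s₀ : ℝ, (∑ j, a j * Complex.exp (Complex.I * (τ j : ℂ) * (s₀ : ℂ))) ≠ 0 := by
  by_contra h
  push_neg at h
  have hli : LinearIndependent ℂ (fun j : Fin (k+1) => ⇑(chr (τ j))) :=
    (linearIndependent_monoidHom (Multiplicative ℝ) ℂ).comp _ (chr_inj.comp hτ)
  have hz : ∀ j, a j = 0 := by
    refine Fintype.linearIndependent_iff.mp hli a ?_
    funext s
    simpa [chr, Finset.sum_apply, mul_comm] using h (Multiplicative.toAdd s)
  obtain ⟨j, hj⟩ := ha
  exact hj (hz j)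

lemma key (k : ℕ) (τ : Fin (k + 1) → ℝ) {ε : ℝ} (hε : 0 < ε) (m : ℕ) :
    ∃ t : ℝ, (m : ℝ) ≤ t ∧ ∀ j, ‖Complex.exp (Complex.I * (τ j : ℂ) * (t : ℂ)) - 1‖ < ε := by
  obtain ⟨u, hu⟩ : ∃ u : ℕ → Fin (k + 1) → ℂ, ∀ n j,
      u n j = Complex.exp (Complex.I * (τ j : ℂ) * ((n * (m + 1) : ℕ) : ℂ)) :=
    ⟨_, fun n j => rfl⟩
  have hnorm : ∀ n j, ‖u n j‖ = 1 := by
    intro n j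
    rw [hu]
    simp [Complex.norm_exp]
  have hmem : ∀ n, u n ∈ Metric.closedBall (0 : Fin (k+1) → ℂ) 1 := by
    intro n
    rw [Metric.mem_closedBall, dist_zero_right]
    exact pi_norm_le_iff_of_nonneg zero_le_one |>.mpr fun j => le_of_eq (hnorm n j)
  obtain ⟨x, -, φ, hφ, hconv⟩ :=
    (isCompact_closedBall (0 : Fin (k+1) → ℂ) 1).tendsto_subseq hmem
  rw [Metric.tendsto_atTop] at hconv
  obtain ⟨N, hN⟩ := hconv (ε / 2) (half_pos hε)
  obtain ⟨p, q, hpq, hp, hq⟩ : ∃ p q : ℕ, p < q ∧ p = φ N ∧ q = φ (N + 1) :=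
    ⟨φ N, φ (N + 1), hφ (Nat.lt_succ_self N), rfl, rfl⟩
  have hd : dist (u q) (u p) < ε := by
    calc dist (u q) (u p) ≤ dist (u q) x + dist (u p) x := dist_triangle_right _ _ _
    _ < ε / 2 + ε / 2 := by
        refine add_lt_add ?_ ?_
        · rw [hq]; exact hN (N+1) (Nat.le_succ N)
        · rw [hp]; exact hN N le_rfl
    _ = ε := add_halves ε
  refine ⟨((q - p) * (m + 1) : ℕ), ?_, ?_⟩
  · have h1 : m ≤ (q - p) * (m + 1) := by
      have : 0 < q - p := Nat.sub_pos_of_lt hpq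
      nlinarith
    exact_mod_cast h1
  · intro j
    have hsplit : u q j = u p j * Complex.exp (Complex.I * (τ j : ℂ) * (((q - p) * (m+1) : ℕ) : ℂ)) := by
      rw [hu, hu, ← Complex.exp_add]
      congr 1
      rw [← mul_add]
      congr 1
      push_cast [Nat.cast_sub hpq.le]
      ring
    have heq : ‖Complex.exp (Complex.I * (τ j : ℂ) * (((q - p) * (m+1) : ℕ) : ℂ)) - 1‖
        = ‖u q j - u p j‖ := by
      rw [hsplit, ← mul_sub_one, norm_mul, hnorm, one_mul]
    have hc : ((((q - p) * (m+1) : ℕ) : ℝ) : ℂ) = (((q - p) * (m+1) : ℕ) : ℂ) := by norm_cast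
    rw [hc, heq]
    calc ‖u q j - u p j‖ = dist (u q j) (u p j) := (dist_eq_norm _ _).symm
    _ ≤ dist (u q) (u p) := dist_le_pi_dist _ _ j
    _ < ε := hd

/-- A nontrivial trigonometric sum `f(s) = Σ aⱼ e^{i τⱼ s}` with distinct real
frequencies does not tend to `0` as `s → +∞` along the reals; moreover, for any real
`s₀` with `f(s₀) ≠ 0` there is a real sequence `s_m → +∞` with `f(s_m) → f(s₀)`. -/
theorem stmt_17 (k : ℕ) (τ : Fin (k + 1) → ℝ) (hτ : Function.Injective τ)
    (a : Fin (k + 1) → ℂ) (ha : ∃ j, a j ≠ 0) :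
    (¬ Tendsto (fun s : ℝ => ∑ j, a j * Complex.exp (Complex.I * (τ j : ℂ) * (s : ℂ)))
        atTop (nhds 0)) ∧
    ∀ s₀ : ℝ, (∑ j, a j * Complex.exp (Complex.I * (τ j : ℂ) * (s₀ : ℂ))) ≠ 0 →
      ∃ s : ℕ → ℝ, Tendsto s atTop atTop ∧
        Tendsto (fun m => ∑ j, a j * Complex.exp (Complex.I * (τ j : ℂ) * (s m : ℂ)))
          atTop (nhds (∑ j, a j * Complex.exp (Complex.I * (τ j : ℂ) * (s₀ : ℂ)))) := by
  have main : ∀ s₀ : ℝ, (∑ j, a j * Complex.exp (Complex.I * (τ j : ℂ) * (s₀ : ℂ))) ≠ 0 →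
      ∃ s : ℕ → ℝ, Tendsto s atTop atTop ∧
        Tendsto (fun m => ∑ j, a j * Complex.exp (Complex.I * (τ j : ℂ) * (s m : ℂ)))
          atTop (nhds (∑ j, a j * Complex.exp (Complex.I * (τ j : ℂ) * (s₀ : ℂ)))) := by
    intro s₀ _
    have hch : ∀ m : ℕ, ∃ t : ℝ, (m : ℝ) ≤ t ∧
        ∀ j, ‖Complex.exp (Complex.I * (τ j : ℂ) * (t : ℂ)) - 1‖ < 1 / (m + 1) := by
      intro m
      exact key k τ (by positivity) m
    choose t ht1 ht2 using hch
    refine ⟨fun m => s₀ + t m, ?_, ?_⟩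
    · apply tendsto_atTop_mono (fun m => add_le_add_right (ht1 m) s₀)
      exact tendsto_atTop_add_const_left _ _ tendsto_natCast_atTop_atTop
    · rw [tendsto_iff_norm_sub_tendsto_zero]
      have hbound : ∀ m : ℕ,
          ‖(∑ j, a j * Complex.exp (Complex.I * (τ j : ℂ) * ((s₀ + t m : ℝ) : ℂ)))
            - ∑ j, a j * Complex.exp (Complex.I * (τ j : ℂ) * (s₀ : ℂ))‖
          ≤ (∑ j, ‖a j‖) * (1 / (m + 1)) := by
        intro m
        rw [← Finset.sum_sub_distrib]
        calc ‖∑ j, (a j * Complex.exp (Complex.I * (τ j : ℂ) * ((s₀ + t m : ℝ) : ℂ))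
                - a j * Complex.exp (Complex.I * (τ j : ℂ) * (s₀ : ℂ)))‖
            ≤ ∑ j, ‖a j * Complex.exp (Complex.I * (τ j : ℂ) * ((s₀ + t m : ℝ) : ℂ))
                - a j * Complex.exp (Complex.I * (τ j : ℂ) * (s₀ : ℂ))‖ :=
              norm_sum_le _ _
          _ ≤ ∑ j, ‖a j‖ * (1 / (m + 1)) := ?_
          _ = (∑ j, ‖a j‖) * (1 / (m + 1)) := (Finset.sum_mul _ _ _).symm
        refine Finset.sum_le_sum fun j _ => ?_
        have haux : Complex.exp (Complex.I * (τ j : ℂ) * ((s₀ + t m : ℝ) : ℂ))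
            = Complex.exp (Complex.I * (τ j : ℂ) * (s₀ : ℂ))
              * Complex.exp (Complex.I * (τ j : ℂ) * ((t m : ℝ) : ℂ)) := by
          rw [← Complex.exp_add]
          push_cast
          ring_nf
        have hfac : a j * Complex.exp (Complex.I * (τ j : ℂ) * ((s₀ + t m : ℝ) : ℂ))
            - a j * Complex.exp (Complex.I * (τ j : ℂ) * (s₀ : ℂ))
            = a j * Complex.exp (Complex.I * (τ j : ℂ) * (s₀ : ℂ))
              * (Complex.exp (Complex.I * (τ j : ℂ) * ((t m : ℝ) : ℂ)) - 1) := by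
          rw [haux]; ring
        rw [hfac, norm_mul, norm_mul]
        have h1 : ‖Complex.exp (Complex.I * (τ j : ℂ) * (s₀ : ℂ))‖ = 1 := by
          simp [Complex.norm_exp]
        rw [h1, mul_one]
        exact mul_le_mul_of_nonneg_left (ht2 m j).le (norm_nonneg _)
      refine squeeze_zero (fun m => norm_nonneg _) hbound ?_
      have : Tendsto (fun m : ℕ => (1 : ℝ) / (m + 1)) atTop (nhds 0) :=
        tendsto_one_div_add_atTop_nhds_zero_nat
      simpa using this.const_mul (∑ j, ‖a j‖)
  refine ⟨?_, main⟩
  intro hten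
  obtain ⟨s₀, hs₀⟩ := exists_nonzero k τ hτ a ha
  obtain ⟨s, hs, hconv⟩ := main s₀ hs₀
  exact hs₀ (tendsto_nhds_unique hconv (hten.comp hs))
end

section
/- Let n_i = σ_i + √(-1) τ_i be complex exponents with σ_i → +∞ and |τ_i/σ_i| bounded for large i, and suppose Σ |a_i| ν^{σ_i} e^{2π|τ_i|} converges for some ν > 0 ('absolute convergence in the sharp sense' at radius ν). Then the termwise derivative series Σ n_i a_i x^{n_i - 1} converges absolutely in the sharp sense at radius ν − ε for every 0 < ε < ν. -/
open Filter Real Topology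

/-- If `Σ aᵢ x^{nᵢ}` (with `nᵢ = σᵢ + iτᵢ`, `σᵢ → +∞`, `|τᵢ/σᵢ|` eventually bounded)
converges absolutely in the sharp sense at radius `ν`, i.e.
`Σ |aᵢ| ν^{σᵢ} e^{2π|τᵢ|} < ∞`, then the termwise derivative series
`Σ nᵢ aᵢ x^{nᵢ - 1}` converges absolutely in the sharp sense at radius `ν - ε` for
every `0 < ε < ν`. -/
theorem stmt_18 (a : ℕ → ℂ) (σ τ : ℕ → ℝ)
    (hσ : Tendsto σ atTop atTop)
    (hbound : ∃ (C : ℝ) (i₀ : ℕ), ∀ i ≥ i₀, |τ i / σ i| ≤ C)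
    (ν : ℝ) (hν : 0 < ν)
    (hconv : Summable fun i => ‖a i‖ * ν ^ (σ i) * Real.exp (2 * π * |τ i|)) :
    ∀ ε : ℝ, 0 < ε → ε < ν →
      Summable fun i =>
        ‖((σ i : ℂ) + (τ i : ℂ) * Complex.I) * a i‖ *
          (ν - ε) ^ (σ i - 1) * Real.exp (2 * π * |τ i|) := by
  intro ε hε hεν
  obtain ⟨C, i₀, hC⟩ := hbound
  have hC0 : 0 ≤ C := le_trans (abs_nonneg _) (hC i₀ le_rfl)
  have hνε : 0 < ν - ε := by linarith
  set r : ℝ := (ν - ε) / ν with hrdef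
  have hr0 : 0 < r := div_pos hνε hν
  have hr1 : r < 1 := by rw [hrdef, div_lt_one hν]; linarith
  have hlog : 0 < -Real.log r := by
    have := Real.log_neg hr0 hr1; linarith
  have htend : Tendsto (fun x : ℝ => (1 + C) * (x * r ^ x)) atTop (𝓝 0) := by
    have h := tendsto_rpow_mul_exp_neg_mul_atTop_nhds_zero 1 (-Real.log r) hlog
    have heq : (fun x : ℝ => x ^ (1 : ℝ) * Real.exp (-(-Real.log r) * x))
        = fun x : ℝ => x * r ^ x := by
      funext x
      rw [Real.rpow_one, neg_neg, Real.rpow_def_of_pos hr0]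
    rw [heq] at h
    have := h.const_mul (1 + C)
    simpa using this
  have hev : ∀ᶠ i in atTop, (1 + C) * (σ i * r ^ (σ i)) < ν - ε :=
    (htend.comp hσ).eventually (gt_mem_nhds hνε)
  have hσ1 : ∀ᶠ i in atTop, 1 ≤ σ i := hσ.eventually_ge_atTop 1
  apply Summable.of_norm_bounded_eventually_nat hconv
  filter_upwards [hev, hσ1, eventually_atTop.2 ⟨i₀, hC⟩] with i h1 h2 h3
  have hσpos : 0 < σ i := lt_of_lt_of_le zero_lt_one h2
  have hτ : |τ i| ≤ C * σ i := by
    rw [abs_div, abs_of_pos hσpos, div_le_iff₀ hσpos] at h3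
    linarith
  have hn : ‖(σ i : ℂ) + (τ i : ℂ) * Complex.I‖ ≤ (1 + C) * σ i := by
    calc ‖(σ i : ℂ) + (τ i : ℂ) * Complex.I‖
        ≤ ‖(σ i : ℂ)‖ + ‖(τ i : ℂ) * Complex.I‖ := norm_add_le _ _
      _ = |σ i| + |τ i| := by simp [Complex.norm_real]
      _ ≤ σ i + C * σ i := by rw [abs_of_pos hσpos]; linarith
      _ = (1 + C) * σ i := by ring
  have hrpow : r ^ (σ i) = (ν - ε) ^ (σ i) / ν ^ (σ i) :=
    Real.div_rpow hνε.le hν.le (σ i)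
  have hνpow : 0 < ν ^ (σ i) := Real.rpow_pos_of_pos hν _
  have h4 : (1 + C) * σ i * (ν - ε) ^ (σ i) ≤ (ν - ε) * ν ^ (σ i) := by
    have h1' : (1 + C) * (σ i * ((ν - ε) ^ (σ i) / ν ^ (σ i))) ≤ ν - ε := by
      rw [← hrpow]; exact h1.le
    rw [mul_div_assoc'] at h1'
    rw [mul_div_assoc', div_le_iff₀ hνpow] at h1'
    linarith [h1']
  have hsub : (ν - ε) ^ (σ i - 1) = (ν - ε) ^ (σ i) / (ν - ε) := by
    rw [Real.rpow_sub hνε, Real.rpow_one]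
  have hkey : ‖(σ i : ℂ) + (τ i : ℂ) * Complex.I‖ * (ν - ε) ^ (σ i - 1) ≤ ν ^ (σ i) := by
    rw [hsub]
    have hpow0 : 0 ≤ (ν - ε) ^ (σ i) := (Real.rpow_pos_of_pos hνε _).le
    calc ‖(σ i : ℂ) + (τ i : ℂ) * Complex.I‖ * ((ν - ε) ^ (σ i) / (ν - ε))
        ≤ (1 + C) * σ i * ((ν - ε) ^ (σ i) / (ν - ε)) := by
          apply mul_le_mul_of_nonneg_right hn
          positivity
      _ = ((1 + C) * σ i * (ν - ε) ^ (σ i)) / (ν - ε) := by ring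
      _ ≤ ((ν - ε) * ν ^ (σ i)) / (ν - ε) := by gcongr
      _ = ν ^ (σ i) := by field_simp
  have hnonneg : 0 ≤ ‖((σ i : ℂ) + (τ i : ℂ) * Complex.I) * a i‖ *
      (ν - ε) ^ (σ i - 1) * Real.exp (2 * π * |τ i|) := by positivity
  rw [Real.norm_of_nonneg hnonneg, norm_mul]
  calc ‖(σ i : ℂ) + (τ i : ℂ) * Complex.I‖ * ‖a i‖ * (ν - ε) ^ (σ i - 1) *
        Real.exp (2 * π * |τ i|)
      = ‖a i‖ * (‖(σ i : ℂ) + (τ i : ℂ) * Complex.I‖ * (ν - ε) ^ (σ i - 1)) *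
        Real.exp (2 * π * |τ i|) := by ring
    _ ≤ ‖a i‖ * ν ^ (σ i) * Real.exp (2 * π * |τ i|) := by
        apply mul_le_mul_of_nonneg_right _ (Real.exp_nonneg _)
        exact mul_le_mul_of_nonneg_left hkey (norm_nonneg _)
end

section
/- Uniqueness theorem for generalized power series: suppose Σ_{i} a_i x^{n_i} with distinct complex exponents n_i = σ_i + iτ_i (σ_i nondecreasing, σ_i → ∞, |τ_i/σ_i| bounded eventually) converges absolutely in the sharp sense on a circle around the origin, and the represented function vanishes identically on a punctured neighborhood of 0 (with x^n = e^{n log x}, 0 ≤ Im log x < 2π). Then all coefficients a_i vanish. -/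
open Filter Real

/-- The branch of the logarithm with imaginary part in `[0, 2π)`. -/
noncomputable def olog (x : ℂ) : ℂ :=
  if 0 ≤ (Complex.log x).im then Complex.log x
  else Complex.log x + 2 * π * Complex.I

/-- The power `x^n = e^{n log x}` with `Im (log x) ∈ [0, 2π)`. -/
noncomputable def opow (x n : ℂ) : ℂ := Complex.exp (n * olog x)

open Topology

lemma cesaro_int (φ : ℝ → ℂ) (hc : Continuous φ) (h : Tendsto φ atTop (𝓝 0)) :
    Tendsto (fun T : ℝ => (T : ℂ)⁻¹ * ∫ t in (0:ℝ)..T, φ t) atTop (𝓝 0) := by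
  rw [NormedAddCommGroup.tendsto_nhds_zero]
  intro ε hε
  obtain ⟨t₁', ht₁'⟩ := (NormedAddCommGroup.tendsto_nhds_zero.mp h (ε / 4)
    (by positivity)).exists_forall_of_atTop
  set t₁ : ℝ := max t₁' 0 with ht₁def
  have ht₁0 : 0 ≤ t₁ := le_max_right _ _
  have hsmall : ∀ t ≥ t₁, ‖φ t‖ ≤ ε / 4 := fun t ht => (ht₁' t (le_trans (le_max_left _ _) ht)).le
  set C : ℝ := ‖∫ t in (0:ℝ)..t₁, φ t‖ with hCdef
  have hC0 : 0 ≤ C := norm_nonneg _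
  filter_upwards [Ici_mem_atTop (max (max t₁ 1) (4 * C / ε + 1))] with T hT
  have hT1 : (1:ℝ) ≤ T := le_trans (le_trans (le_max_right _ _) (le_max_left _ _)) hT
  have hTt₁ : t₁ ≤ T := le_trans (le_trans (le_max_left _ _) (le_max_left _ _)) hT
  have hTC : 4 * C / ε + 1 ≤ T := le_trans (le_max_right _ _) hT
  have hT0 : (0:ℝ) < T := lt_of_lt_of_le one_pos hT1
  have hsplit : (∫ t in (0:ℝ)..T, φ t) = (∫ t in (0:ℝ)..t₁, φ t) + ∫ t in t₁..T, φ t :=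
    (intervalIntegral.integral_add_adjacent_intervals (hc.intervalIntegrable _ _)
      (hc.intervalIntegrable _ _)).symm
  have htail : ‖∫ t in t₁..T, φ t‖ ≤ ε / 4 * |T - t₁| := by
    apply intervalIntegral.norm_integral_le_of_norm_le_const
    intro x hx
    rw [Set.uIoc_of_le hTt₁] at hx
    exact hsmall x hx.1.le
  have hnorm : ‖(T : ℂ)⁻¹ * ∫ t in (0:ℝ)..T, φ t‖ ≤ T⁻¹ * (C + ε / 4 * T) := by
    rw [norm_mul, norm_inv, Complex.norm_real, Real.norm_eq_abs, abs_of_pos hT0]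
    gcongr
    rw [hsplit]
    refine le_trans (norm_add_le _ _) ?_
    gcongr
    refine le_trans htail ?_
    rw [abs_of_nonneg (by linarith)]
    nlinarith [hsmall t₁ le_rfl, norm_nonneg (φ t₁)]
  refine lt_of_le_of_lt hnorm ?_
  rw [mul_add, inv_mul_eq_div]
  have h1 : C / T < ε / 2 := by
    rw [div_lt_iff₀ hT0]
    have he : ε / 2 * (4 * C / ε + 1) = 2 * C + ε / 2 := by field_simp; ring
    nlinarith [mul_le_mul_of_nonneg_left hTC (le_of_lt (half_pos hε))]
  have h2 : T⁻¹ * (ε / 4 * T) = ε / 4 := by field_simp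
  rw [h2]
  linarith

lemma trig_poly (S : Finset ℕ) (c : ℕ → ℂ) (μ : ℕ → ℝ)
    (hinj : ∀ i ∈ S, ∀ j ∈ S, μ i = μ j → i = j)
    (h : Tendsto (fun t : ℝ => ∑ j ∈ S, c j * Complex.exp (Complex.I * (μ j : ℂ) * t))
      atTop (𝓝 0)) :
    ∀ j ∈ S, c j = 0 := by
  intro j₀ hj₀
  set d : ℕ → ℂ := fun j => Complex.I * ((μ j : ℂ) - (μ j₀ : ℂ)) with hd
  set φ : ℝ → ℂ := fun t => ∑ j ∈ S, c j * Complex.exp (d j * t) with hφ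
  have hcont : Continuous φ := by
    apply continuous_finset_sum
    intro j _
    exact continuous_const.mul (Complex.continuous_exp.comp
      (continuous_const.mul Complex.continuous_ofReal))
  -- φ t = (original sum) * exp(-I μ j₀ t), which tends to 0
  have hφ_eq : ∀ t : ℝ,
      φ t = (∑ j ∈ S, c j * Complex.exp (Complex.I * (μ j : ℂ) * t)) *
        Complex.exp (-(Complex.I * (μ j₀ : ℂ) * t)) := by
    intro t
    rw [Finset.sum_mul]
    refine Finset.sum_congr rfl fun j _ => ?_
    rw [mul_assoc (c j), ← Complex.exp_add]
    congr 2
    ring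
  have hφ0 : Tendsto φ atTop (𝓝 0) := by
    rw [tendsto_zero_iff_norm_tendsto_zero]
    have : ∀ t : ℝ, ‖φ t‖ = ‖∑ j ∈ S, c j * Complex.exp (Complex.I * (μ j : ℂ) * t)‖ := by
      intro t
      rw [hφ_eq t, norm_mul]
      have : ‖Complex.exp (-(Complex.I * (μ j₀ : ℂ) * t))‖ = 1 := by
        have : -(Complex.I * (μ j₀ : ℂ) * t) = ((-(μ j₀ * t) : ℝ) : ℂ) * Complex.I := by
          push_cast; ring
        rw [this, Complex.norm_exp_ofReal_mul_I]
      rw [this, mul_one]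
    simp only [this]
    exact (tendsto_zero_iff_norm_tendsto_zero.mp h)
  -- the Cesàro limit is 0
  have hces := cesaro_int φ hcont hφ0
  -- the averaged integrals
  set q : ℕ → ℝ → ℂ := fun j T => (T : ℂ)⁻¹ * ∫ t in (0:ℝ)..T, Complex.exp (d j * t) with hq
  have hint_eq : ∀ᶠ T : ℝ in atTop, (T : ℂ)⁻¹ * ∫ t in (0:ℝ)..T, φ t = ∑ j ∈ S, c j * q j T := by
    filter_upwards with T
    rw [hφ]
    rw [intervalIntegral.integral_finset_sum]
    · rw [Finset.mul_sum]
      refine Finset.sum_congr rfl fun j _ => ?_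
      rw [intervalIntegral.integral_const_mul]
      ring
    · intro j _
      exact (continuous_const.mul (Complex.continuous_exp.comp
        (continuous_const.mul Complex.continuous_ofReal))).intervalIntegrable _ _
  -- limit of q j
  have hqlim : ∀ j ∈ S, Tendsto (q j) atTop (𝓝 (if j = j₀ then 1 else 0)) := by
    intro j hj
    by_cases hjj : j = j₀
    · subst hjj
      simp only [if_pos rfl]
      have hd0 : d j = 0 := by simp [hd]
      have heq : q j =ᶠ[atTop] (fun _ => 1) := by
        filter_upwards [eventually_ge_atTop (1:ℝ)] with T hT
        have hT0 : (T : ℂ) ≠ 0 := by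
          simp only [ne_eq, Complex.ofReal_eq_zero]
          linarith
        simp [hq, hd0, intervalIntegral.integral_const, hT0]
      exact Tendsto.congr' heq.symm tendsto_const_nhds
    · simp only [if_neg hjj]
      have hdj : d j ≠ 0 := by
        simp only [hd]
        apply mul_ne_zero Complex.I_ne_zero
        rw [sub_ne_zero]
        intro hμ
        exact hjj (hinj j hj j₀ hj₀ (by exact_mod_cast hμ))
      rw [tendsto_zero_iff_norm_tendsto_zero]
      apply squeeze_zero' (Eventually.of_forall fun T => norm_nonneg _)
      · filter_upwards [eventually_ge_atTop (1:ℝ)] with T hT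
        have hT0 : (0:ℝ) < T := lt_of_lt_of_le one_pos hT
        show ‖q j T‖ ≤ T⁻¹ * (2 / ‖d j‖)
        rw [hq]
        simp only
        rw [integral_exp_mul_complex hdj, norm_mul, norm_inv, Complex.norm_real,
          Real.norm_eq_abs, abs_of_pos hT0, norm_div]
        gcongr
        refine le_trans (norm_sub_le _ _) ?_
        have h1 : ‖Complex.exp (d j * T)‖ = 1 := by
          have : d j * T = (((μ j - μ j₀) * T : ℝ) : ℂ) * Complex.I := by
            simp only [hd]; push_cast; ring
          rw [this, Complex.norm_exp_ofReal_mul_I]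
        have h2 : ‖Complex.exp (d j * (0:ℝ))‖ = 1 := by
          norm_num
        rw [h1, h2]; norm_num
      · simpa using tendsto_inv_atTop_zero.mul_const (2 / ‖d j‖)
  -- combine
  have hsum : Tendsto (fun T : ℝ => ∑ j ∈ S, c j * q j T) atTop
      (𝓝 (∑ j ∈ S, c j * (if j = j₀ then 1 else 0))) := by
    apply tendsto_finset_sum
    intro j hj
    exact (hqlim j hj).const_mul _
  have hval : (∑ j ∈ S, c j * (if j = j₀ then 1 else 0)) = c j₀ := by
    rw [Finset.sum_congr rfl (fun j _ => by rw [mul_ite, mul_one, mul_zero]),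
      Finset.sum_ite_eq' S j₀ c, if_pos hj₀]
  rw [hval] at hsum
  have := tendsto_nhds_unique (hces.congr' hint_eq) hsum
  exact this.symm

lemma norm_exp_eq (x y : ℝ) : ‖Complex.exp ((x : ℂ) + (y : ℂ) * Complex.I)‖ = Real.exp x := by
  rw [Complex.exp_add, norm_mul, Complex.norm_exp_ofReal_mul_I, mul_one, ← Complex.ofReal_exp,
    Complex.norm_real, Real.norm_eq_abs, abs_of_pos (Real.exp_pos x)]

/-- Uniqueness theorem for generalized power series: if `Σ aᵢ x^{nᵢ}` with distinct
complex exponents `nᵢ = σᵢ + iτᵢ` (`σᵢ` nondecreasing with `σᵢ → ∞`, `|τᵢ/σᵢ|`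
eventually bounded) converges absolutely in the sharp sense at some radius `ν > 0` and
the represented function vanishes on a punctured neighbourhood of `0`, then all
coefficients vanish. -/
theorem stmt_19 (a : ℕ → ℂ) (σ τ : ℕ → ℝ)
    (hdist : Function.Injective fun i => ((σ i : ℂ) + (τ i : ℂ) * Complex.I))
    (hmono : Monotone σ) (hσ : Tendsto σ atTop atTop)
    (hbound : ∃ (C : ℝ) (i₀ : ℕ), ∀ i ≥ i₀, |τ i / σ i| ≤ C)
    (ν : ℝ) (hν : 0 < ν)
    (hconv : Summable fun i => ‖a i‖ * ν ^ (σ i) * Real.exp (2 * π * |τ i|))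
    (δ : ℝ) (hδ : 0 < δ)
    (hzero : ∀ x : ℂ, x ≠ 0 → ‖x‖ < δ →
      ∑' i, a i * opow x ((σ i : ℂ) + (τ i : ℂ) * Complex.I) = 0) :
    ∀ i, a i = 0 := by
  by_contra hcon
  push_neg at hcon
  obtain ⟨i₁, hi₁⟩ := hcon
  -- finiteness of level sets
  obtain ⟨N, hN⟩ := eventually_atTop.mp (hσ.eventually (eventually_gt_atTop (σ i₁)))
  have hi₁N : i₁ < N := by
    by_contra hge
    exact lt_irrefl _ (hN i₁ (le_of_not_gt hge))
  set F : Finset ℕ := (Finset.range N).filter (fun i => a i ≠ 0) with hF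
  have hi₁F : i₁ ∈ F := by simp [hF, Finset.mem_filter, Finset.mem_range, hi₁N, hi₁]
  have hFne : F.Nonempty := ⟨i₁, hi₁F⟩
  set σ₀ : ℝ := F.inf' hFne σ with hσ₀
  have hσ₀i₁ : σ₀ ≤ σ i₁ := Finset.inf'_le σ hi₁F
  have hlow : ∀ i, a i ≠ 0 → σ₀ ≤ σ i := by
    intro i hi
    by_cases hiN : i < N
    · exact Finset.inf'_le σ (by simp [hF, Finset.mem_filter, Finset.mem_range, hiN, hi])
    · exact le_of_lt (lt_of_le_of_lt hσ₀i₁ (hN i (le_of_not_gt hiN)))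
  set S : Finset ℕ := F.filter (fun i => σ i = σ₀) with hS
  obtain ⟨j₁, hj₁F, hj₁σ⟩ := Finset.exists_mem_eq_inf' hFne σ
  have hj₁S : j₁ ∈ S := by simp [hS, Finset.mem_filter, hj₁F, hj₁σ.symm, hσ₀]
  have hj₁a : a j₁ ≠ 0 := (Finset.mem_filter.mp hj₁F).2
  have hmemS : ∀ i ∈ S, a i ≠ 0 ∧ σ i = σ₀ := by
    intro i hi
    have := Finset.mem_filter.mp hi
    exact ⟨(Finset.mem_filter.mp this.1).2, this.2⟩
  have hgt : ∀ i, i ∉ S → a i ≠ 0 → σ₀ < σ i := by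
    intro i hiS hi
    rcases lt_or_eq_of_le (hlow i hi) with h | h
    · exact h
    · exfalso
      apply hiS
      have hiN : i < N := by
        by_contra hge
        exact absurd (h ▸ hσ₀i₁) (not_le.mpr (hN i (le_of_not_gt hge)))
      simp [hS, hF, Finset.mem_filter, Finset.mem_range, hiN, hi, h.symm]
  -- the rescaled terms
  set f : ℝ → ℕ → ℂ := fun t i =>
    a i * Complex.exp ((((σ₀ - σ i : ℝ) : ℂ) + ((-τ i : ℝ) : ℂ) * Complex.I) * (t : ℂ)) with hf
  have hnormf : ∀ t i, ‖f t i‖ = ‖a i‖ * Real.exp ((σ₀ - σ i) * t) := by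
    intro t i
    rw [hf]
    simp only
    rw [norm_mul]
    congr 1
    have : (((σ₀ - σ i : ℝ) : ℂ) + ((-τ i : ℝ) : ℂ) * Complex.I) * (t : ℂ) =
        (((σ₀ - σ i) * t : ℝ) : ℂ) + (((-τ i) * t : ℝ) : ℂ) * Complex.I := by
      push_cast; ring
    rw [this, norm_exp_eq]
  -- the vanishing identity
  set tν : ℝ := -Real.log ν with htν
  have hbound_exp : ∀ i, a i ≠ 0 → ∀ t ≥ tν,
      Real.exp ((σ₀ - σ i) * t) ≤ ν ^ (σ i - σ₀) := by
    intro i hi t ht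
    rw [Real.rpow_def_of_pos hν]
    apply Real.exp_le_exp.mpr
    have h1 : σ₀ - σ i ≤ 0 := sub_nonpos.mpr (hlow i hi)
    nlinarith [mul_le_mul_of_nonpos_left ht h1]
  set bound : ℕ → ℝ := fun i => ‖a i‖ * ν ^ (σ i - σ₀) with hbnd
  have hbound_sum : Summable bound := by
    have h1 : Summable (fun i => ‖a i‖ * ν ^ (σ i)) := by
      apply hconv.of_nonneg_of_le (fun i => by positivity)
      intro i
      exact le_mul_of_one_le_right (by positivity) (Real.one_le_exp (by positivity))
    apply (h1.mul_right ((ν ^ σ₀)⁻¹)).congr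
    intro i
    rw [hbnd]
    simp only
    rw [Real.rpow_sub hν]
    ring
  have hfb : ∀ t ≥ tν, ∀ i, ‖f t i‖ ≤ bound i := by
    intro t ht i
    by_cases hi : a i = 0
    · rw [hnormf]; rw [hi]; simp; positivity
    · rw [hnormf, hbnd]
      exact mul_le_mul_of_nonneg_left (hbound_exp i hi t ht) (norm_nonneg _)
  have hfsummable : ∀ t ≥ tν, Summable (f t) :=
    fun t ht => Summable.of_norm_bounded hbound_sum (hfb t ht)
  -- the tsum vanishes for large t
  have hkey : ∀ t : ℝ, Real.exp (-t) < δ → ∑' i, f t i = 0 := by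
    intro t ht
    have hx0 : (Real.exp (-t) : ℂ) ≠ 0 := Complex.ofReal_ne_zero.mpr (Real.exp_ne_zero _)
    have hxnorm : ‖(Real.exp (-t) : ℂ)‖ < δ := by
      rw [Complex.norm_real, Real.norm_eq_abs, abs_of_pos (Real.exp_pos _)]; exact ht
    have h0 := hzero _ hx0 hxnorm
    have holog : olog (Real.exp (-t) : ℂ) = ((-t : ℝ) : ℂ) := by
      have hlog : Complex.log (Real.exp (-t) : ℂ) = ((-t : ℝ) : ℂ) := by
        rw [← Complex.ofReal_log (Real.exp_pos _).le, Real.log_exp]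
      rw [olog, hlog]
      simp
    have hterm : ∀ i, f t i =
        (a i * opow (Real.exp (-t) : ℂ) ((σ i : ℂ) + (τ i : ℂ) * Complex.I)) *
          Complex.exp ((σ₀ : ℝ) * t) := by
      intro i
      rw [opow, holog, hf]
      simp only
      rw [mul_assoc, ← Complex.exp_add]
      congr 2
      push_cast
      ring
    calc ∑' i, f t i
        = (∑' i, a i * opow (Real.exp (-t) : ℂ) ((σ i : ℂ) + (τ i : ℂ) * Complex.I)) *
          Complex.exp ((σ₀ : ℝ) * t) := by
          rw [← tsum_mul_right]
          exact tsum_congr hterm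
      _ = 0 := by rw [h0, zero_mul]
  -- splitting off S
  have hδt : ∀ᶠ t : ℝ in atTop, Real.exp (-t) < δ := by
    filter_upwards [eventually_gt_atTop (-Real.log δ)] with t ht
    calc Real.exp (-t) < Real.exp (Real.log δ) := Real.exp_lt_exp.mpr (by linarith)
      _ = δ := Real.exp_log hδ
  have hsplit : ∀ᶠ t : ℝ in atTop,
      ∑ i ∈ S, f t i = - ∑' (i : ((↑S : Set ℕ)ᶜ : Set ℕ)), f t ↑i := by
    filter_upwards [eventually_ge_atTop tν, hδt] with t ht1 ht2
    have h := Summable.sum_add_tsum_compl (s := S) (hfsummable t ht1)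
    rw [hkey t ht2] at h
    exact eq_neg_of_add_eq_zero_left h
  have htannery : Tendsto (fun t : ℝ => ∑' (i : ((↑S : Set ℕ)ᶜ : Set ℕ)), f t ↑i)
      atTop (𝓝 0) := by
    have h0 : (𝓝 (0:ℂ)) = 𝓝 (∑' (_ : ((↑S : Set ℕ)ᶜ : Set ℕ)), (0:ℂ)) := by rw [tsum_zero]
    rw [h0]
    apply tendsto_tsum_of_dominated_convergence
      (bound := fun i : ((↑S : Set ℕ)ᶜ : Set ℕ) => bound ↑i)
    · exact hbound_sum.subtype _
    · rintro ⟨i, hi⟩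
      by_cases hai : a i = 0
      · have heq : (fun t : ℝ => f t i) = fun _ => (0:ℂ) := by
          funext t; rw [hf]; simp [hai]
        show Tendsto (fun t : ℝ => f t i) atTop (𝓝 0)
        rw [heq]
        exact tendsto_const_nhds
      · have hσi : σ₀ < σ i := hgt i (by simpa using hi) hai
        show Tendsto (fun t : ℝ => f t i) atTop (𝓝 0)
        rw [tendsto_zero_iff_norm_tendsto_zero]
        have heq : (fun t : ℝ => ‖f t i‖) = fun t => ‖a i‖ * Real.exp ((σ₀ - σ i) * t) :=
          funext (fun t => hnormf t i)
        rw [heq]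
        have h1 : Tendsto (fun t : ℝ => (σ₀ - σ i) * t) atTop atBot := by
          apply tendsto_id.const_mul_atTop_of_neg (by linarith)
        have h2 := (Real.tendsto_exp_atBot.comp h1).const_mul (‖a i‖)
        rw [mul_zero] at h2
        exact h2
    · filter_upwards [eventually_ge_atTop tν] with t ht
      rintro ⟨i, hi⟩
      exact hfb t ht i
  have hStendsto : Tendsto (fun t : ℝ => ∑ i ∈ S, f t i) atTop (𝓝 0) := by
    have h2 := htannery.neg
    rw [neg_zero] at h2
    exact Tendsto.congr' (Filter.EventuallyEq.symm hsplit) h2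
  have htrig : Tendsto
      (fun t : ℝ => ∑ j ∈ S, a j * Complex.exp (Complex.I * ((-τ j : ℝ) : ℂ) * t))
      atTop (𝓝 0) := by
    apply hStendsto.congr
    intro t
    apply Finset.sum_congr rfl
    intro i hi
    rw [hf]
    simp only
    congr 2
    rw [(hmemS i hi).2]
    push_cast
    ring
  have hinjS : ∀ i ∈ S, ∀ j ∈ S, -τ i = -τ j → i = j := by
    intro i hi j hj hτ
    apply hdist
    simp only
    rw [(hmemS i hi).2, (hmemS j hj).2]
    have hττ : τ i = τ j := by linarith
    rw [hττ]
  exact hj₁a (trig_poly S a (fun i => -τ i) hinjS htrig j₁ hj₁S)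
end
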